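/- For the qubit dephasing channel (a Pauli channel with p₁ = p₂ = 0, p₀ = p, p₃ = 1−p, p ∈ [0,1]), the four eigenvalues λ_i from the Pauli-channel squashing construction reduce to λ₀ = λ₁ = (1 + 2√(p(1−p)) cos φ₃)/4 and λ₂ = λ₃ = (1 − 2√(p(1−p)) cos φ₃)/4, and the Shannon entropy H(λ) over φ₃ ∈ ℝ is minimized at φ₃ = 0, where it equals 1 + h₂((1 + 2√(p(1−p)))/2), with h₂ the binary entropy function. -/

import Mathlib

open BigOperators

/-- Shannon entropy (in bits) of a vector of four reals. -/
noncomputable def H4 (l : Fin 4 → ℝ) : ℝ := -∑ i, l i * Real.logb 2 (l i)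

/-- Binary entropy function. -/
noncomputable def h2 (x : ℝ) : ℝ := -x * Real.logb 2 x - (1 - x) * Real.logb 2 (1 - x)

/-- The four eigenvalues λ₀,λ₁,λ₂,λ₃ of ρ_BE for the dephasing channel
(p₁ = p₂ = 0, p₀ = p, p₃ = 1−p), as a function of the phase φ₃. -/
noncomputable def dephasingEig (p φ : ℝ) : Fin 4 → ℝ :=
  ![‖(Real.sqrt p : ℂ) + Complex.exp (φ * Complex.I) * (Real.sqrt (1 - p) : ℂ)‖ ^ 2 / 4,
    ‖(Real.sqrt p : ℂ) + Complex.exp (φ * Complex.I) * (Real.sqrt (1 - p) : ℂ)‖ ^ 2 / 4,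
    ‖(Real.sqrt p : ℂ) - Complex.exp (φ * Complex.I) * (Real.sqrt (1 - p) : ℂ)‖ ^ 2 / 4,
    ‖(Real.sqrt p : ℂ) - Complex.exp (φ * Complex.I) * (Real.sqrt (1 - p) : ℂ)‖ ^ 2 / 4]

lemma abs_sq_plus (p φ : ℝ) (hp0 : 0 ≤ p) (hp1 : p ≤ 1) :
    ‖(Real.sqrt p : ℂ) + Complex.exp (φ * Complex.I) * (Real.sqrt (1 - p) : ℂ)‖ ^ 2
      = 1 + 2 * Real.sqrt (p * (1 - p)) * Real.cos φ := by
  rw [← Complex.normSq_eq_norm_sq, Complex.exp_mul_I, Complex.normSq_apply]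
  simp [Complex.add_re, Complex.add_im, Complex.mul_re, Complex.mul_im,
    Complex.cos_ofReal_re, Complex.sin_ofReal_re]
  have h1 : Real.sqrt p ^ 2 = p := Real.sq_sqrt hp0
  have h2 : Real.sqrt (1-p) ^ 2 = 1-p := Real.sq_sqrt (by linarith)
  have h3 : Real.sqrt p * Real.sqrt (1-p) = Real.sqrt (p*(1-p)) := (Real.sqrt_mul hp0 _).symm
  have h4 := Real.sin_sq_add_cos_sq φ
  linear_combination h1 + h2 + (Real.sqrt (1-p))^2 * h4 + 2 * Real.cos φ * h3

lemma abs_sq_minus (p φ : ℝ) (hp0 : 0 ≤ p) (hp1 : p ≤ 1) :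
    ‖(Real.sqrt p : ℂ) - Complex.exp (φ * Complex.I) * (Real.sqrt (1 - p) : ℂ)‖ ^ 2
      = 1 - 2 * Real.sqrt (p * (1 - p)) * Real.cos φ := by
  rw [← Complex.normSq_eq_norm_sq, Complex.exp_mul_I, Complex.normSq_apply]
  simp [Complex.sub_re, Complex.sub_im, Complex.mul_re, Complex.mul_im,
    Complex.cos_ofReal_re, Complex.sin_ofReal_re]
  have h1 : Real.sqrt p ^ 2 = p := Real.sq_sqrt hp0
  have h2 : Real.sqrt (1-p) ^ 2 = 1-p := Real.sq_sqrt (by linarith)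
  have h3 : Real.sqrt p * Real.sqrt (1-p) = Real.sqrt (p*(1-p)) := (Real.sqrt_mul hp0 _).symm
  have h4 := Real.sin_sq_add_cos_sq φ
  linear_combination h1 + h2 + (Real.sqrt (1-p))^2 * h4 - 2 * Real.cos φ * h3

lemma key_logb (y : ℝ) (hy : 0 ≤ y) :
    y/2 * Real.logb 2 (y/2) = (y * Real.logb 2 y - y)/2 := by
  rcases eq_or_lt_of_le hy with h | h
  · simp [← h]
  · rw [Real.logb_div h.ne' two_ne_zero, Real.logb_self_eq_one (by norm_num)]
    ring

lemma halfH (c : ℝ) (hc1 : -1 ≤ c) (hc2 : c ≤ 1) :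
    H4 ![(1+c)/4, (1+c)/4, (1-c)/4, (1-c)/4] = 1 + h2 ((1+c)/2) := by
  simp only [H4, Fin.sum_univ_four, Matrix.cons_val_zero, Matrix.cons_val_one, Matrix.head_cons,
    Matrix.cons_val_two, Matrix.tail_cons, Matrix.cons_val_three]
  rw [show (1+c)/4 = ((1+c)/2)/2 by ring, show (1-c)/4 = ((1-c)/2)/2 by ring,
    key_logb ((1+c)/2) (by linarith), key_logb ((1-c)/2) (by linarith)]
  simp only [h2]
  rw [show (1:ℝ) - (1+c)/2 = (1-c)/2 by ring]
  ring

lemma h2_eq_binEntropy (x : ℝ) : h2 x = Real.binEntropy x / Real.log 2 := by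
  simp only [h2, Real.binEntropy, Real.log_inv, Real.logb]
  ring

lemma h2_mono (s t : ℝ) (hs0 : 0 ≤ s) (hs1 : s ≤ 1) (ht : |t| ≤ 1) :
    h2 ((1+s)/2) ≤ h2 ((1+s*t)/2) := by
  have hlog : (0:ℝ) < Real.log 2 := Real.log_pos (by norm_num)
  rw [h2_eq_binEntropy, h2_eq_binEntropy]
  have ht0 : 0 ≤ |t| := abs_nonneg t
  have hst : s * |t| ≤ s := by nlinarith
  have habs : Real.binEntropy ((1+s*t)/2) = Real.binEntropy ((1+s*|t|)/2) := by
    rcases abs_cases t with ⟨h, _⟩ | ⟨h, _⟩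
    · rw [h]
    · rw [h, show (1+s*(-t))/2 = 1 - (1+s*t)/2 by ring, Real.binEntropy_one_sub]
  rw [habs]
  have hb : Real.binEntropy ((1+s)/2) ≤ Real.binEntropy ((1+s*|t|)/2) := by
    apply Real.binEntropy_strictAntiOn.antitoneOn
    · constructor
      · rw [inv_eq_one_div]; nlinarith
      · nlinarith
    · constructor
      · rw [inv_eq_one_div]; linarith
      · linarith
    · nlinarith
  exact div_le_div_of_nonneg_right hb hlog.le

/-- **Dephasing channel**: the eigenvalues reduce to
λ₀ = λ₁ = (1 + 2√(p(1−p)) cos φ₃)/4 and λ₂ = λ₃ = (1 − 2√(p(1−p)) cos φ₃)/4,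
and the Shannon entropy H(λ) is minimized over φ₃ at φ₃ = 0, where it equals
1 + h₂((1 + 2√(p(1−p)))/2). -/
theorem dephasing_entropy_min (p : ℝ) (hp : p ∈ Set.Icc (0 : ℝ) 1) :
    (∀ φ : ℝ,
      dephasingEig p φ 0 = (1 + 2 * Real.sqrt (p * (1 - p)) * Real.cos φ) / 4 ∧
      dephasingEig p φ 1 = (1 + 2 * Real.sqrt (p * (1 - p)) * Real.cos φ) / 4 ∧
      dephasingEig p φ 2 = (1 - 2 * Real.sqrt (p * (1 - p)) * Real.cos φ) / 4 ∧
      dephasingEig p φ 3 = (1 - 2 * Real.sqrt (p * (1 - p)) * Real.cos φ) / 4) ∧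
    (∀ φ : ℝ, H4 (dephasingEig p 0) ≤ H4 (dephasingEig p φ)) ∧
    H4 (dephasingEig p 0) = 1 + h2 ((1 + 2 * Real.sqrt (p * (1 - p))) / 2) := by
  obtain ⟨hp0, hp1⟩ := hp
  have hs0 : 0 ≤ Real.sqrt (p * (1-p)) := Real.sqrt_nonneg _
  have hs1 : 2 * Real.sqrt (p * (1-p)) ≤ 1 := by
    have h : Real.sqrt (p * (1-p)) ≤ Real.sqrt (1/4) :=
      Real.sqrt_le_sqrt (by nlinarith [sq_nonneg (2*p-1)])
    rw [show (1/4:ℝ) = (1/2)^2 by norm_num, Real.sqrt_sq (by norm_num)] at h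
    linarith
  have heig : ∀ φ : ℝ, dephasingEig p φ =
      ![(1 + 2 * Real.sqrt (p * (1-p)) * Real.cos φ)/4,
        (1 + 2 * Real.sqrt (p * (1-p)) * Real.cos φ)/4,
        (1 - 2 * Real.sqrt (p * (1-p)) * Real.cos φ)/4,
        (1 - 2 * Real.sqrt (p * (1-p)) * Real.cos φ)/4] := by
    intro φ
    funext i
    fin_cases i <;>
      simp [dephasingEig, abs_sq_plus p φ hp0 hp1, abs_sq_minus p φ hp0 hp1]
  have hcbound : ∀ φ : ℝ, |2 * Real.sqrt (p * (1-p)) * Real.cos φ| ≤ 1 := by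
    intro φ
    rw [abs_mul]
    have h1 := Real.abs_cos_le_one φ
    have h2 : |2 * Real.sqrt (p * (1-p))| = 2 * Real.sqrt (p * (1-p)) := abs_of_nonneg (by linarith)
    rw [h2]
    nlinarith
  have hH : ∀ φ : ℝ, H4 (dephasingEig p φ)
      = 1 + h2 ((1 + 2 * Real.sqrt (p * (1-p)) * Real.cos φ)/2) := by
    intro φ
    rw [heig φ]
    have := hcbound φ
    exact halfH _ (by cases abs_le.mp this; linarith) (by cases abs_le.mp this; linarith)
  have hH0 : H4 (dephasingEig p 0) = 1 + h2 ((1 + 2 * Real.sqrt (p * (1-p)))/2) := by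
    rw [hH 0, Real.cos_zero, mul_one]
  refine ⟨?_, ?_, hH0⟩
  · intro φ
    rw [heig φ]
    refine ⟨rfl, rfl, rfl, rfl⟩
  · intro φ
    rw [hH0, hH φ]
    have := h2_mono (2 * Real.sqrt (p * (1-p))) (Real.cos φ) (by linarith) hs1
      (Real.abs_cos_le_one φ)
    linarith [this]
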